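/- Let (A,B) be a consistent basic instance of nonempty sums of cycles such that B(b) = 1 for every b ∈ L(B) (all cycles of B have distinct lengths). Then the instance has at most one solution, and if a solution exists it equals C_1 (so that A = B). -/

import Mathlib

/-- A sum of cycles has all cycle lengths positive. -/
def Pos (A : ℕ →₀ ℕ) : Prop := ∀ a ∈ A.support, 0 < a

/-- The single cycle of length `n`. -/
noncomputable def Cyc (n : ℕ) : ℕ →₀ ℕ := Finsupp.single n 1

/-- Product of sums of cycles: `C_a · C_x = gcd(a,x) C_{lcm(a,x)}`, extended by distributivity. -/
noncomputable def cmul (A X : ℕ →₀ ℕ) : ℕ →₀ ℕ :=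
  A.sum fun a m => X.sum fun x n => (m * n * Nat.gcd a x) • Finsupp.single (Nat.lcm a x) 1

/-- Number of vertices of a sum of cycles. -/
def size (A : ℕ →₀ ℕ) : ℕ := A.sum fun ℓ m => ℓ * m

/-- The support `L(A,B)` of an instance. -/
def instSupp (A B : ℕ →₀ ℕ) : Set ℕ :=
  {x | 0 < x ∧ x ≤ size B / size A ∧ ∀ a ∈ A.support, Nat.lcm a x ∈ B.support}

/-- Consistency: `L(A) ∨ L(A,B) = L(B)`. -/
def Consistent (A B : ℕ →₀ ℕ) : Prop :=
  {ℓ | ∃ a ∈ A.support, ∃ x ∈ instSupp A B, Nat.lcm a x = ℓ} = ↑B.support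

/-- Cycle length multiplication `A ⊗ p`. -/
noncomputable def otimes (A : ℕ →₀ ℕ) (p : ℕ) : ℕ →₀ ℕ :=
  A.mapDomain (fun a => p * a)

/-- Cycle length division `A ⊘ p`: `(A ⊘ p)(a) = A (p*a)`. -/
noncomputable def oslash (A : ℕ →₀ ℕ) (p : ℕ) : ℕ →₀ ℕ :=
  if hp : p = 0 then 0 else
    Finsupp.comapDomain (fun a => p * a) A ((mul_right_injective₀ hp).injOn)

/-- Contraction `A ⊟ p`: each cycle of length `p*a` becomes `p` cycles of length `a`. -/
noncomputable def contract (A : ℕ →₀ ℕ) (p : ℕ) : ℕ →₀ ℕ :=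
  A.filter (fun a => ¬ p ∣ a) + p • oslash A p

lemma cmul_apply' (A X : ℕ →₀ ℕ) (b : ℕ) :
    cmul A X b = ∑ a ∈ A.support, ∑ x ∈ X.support,
      (if Nat.lcm a x = b then A a * X x * Nat.gcd a x else 0) := by
  unfold cmul
  simp only [Finsupp.sum_apply, Finsupp.sum, Finset.sum_apply', Finsupp.smul_apply,
    Finsupp.single_apply, smul_eq_mul, mul_ite, mul_one, mul_zero]

lemma coprime_finset_lcm' {x : ℕ} (s : Finset ℕ) (h : ∀ a ∈ s, Nat.Coprime x a) :
    Nat.Coprime x (s.lcm id) := by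
  induction s using Finset.induction with
  | empty => simp
  | insert _ _ hni ih =>
    rw [Finset.lcm_insert]
    exact Nat.Coprime.coprime_dvd_right (lcm_dvd (dvd_mul_right _ _) (dvd_mul_left _ _))
      ((h _ (Finset.mem_insert_self _ _)).mul_right
        (ih fun a hs => h a (Finset.mem_insert_of_mem hs)))

lemma cmul_cyc_one' (A : ℕ →₀ ℕ) : cmul A (Cyc 1) = A := by
  unfold cmul Cyc
  conv_rhs => rw [← Finsupp.sum_single A]
  refine Finsupp.sum_congr fun a _ => ?_
  rw [Finsupp.sum_single_index (by simp)]
  simp [Nat.lcm_one_right, Nat.gcd_one_right, Finsupp.smul_single]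


theorem distinct_lengths_unique_solution (A B : ℕ →₀ ℕ) (hA : Pos A) (hB : Pos B)
    (hAne : A ≠ 0) (hBne : B ≠ 0) (hcons : Consistent A B)
    (hbasic : ∀ b ∈ B.support, b ∣ A.support.lcm id)
    (hmult : ∀ b ∈ B.support, B b = 1) :
    ∀ X : ℕ →₀ ℕ, Pos X → cmul A X = B → X = Cyc 1 ∧ A = B := by
  intro X hX hAX
  have hAsupp : A.support.Nonempty := Finsupp.support_nonempty_iff.mpr hAne
  have hXsupp : X.support.Nonempty := by
    rw [Finsupp.support_nonempty_iff]
    rintro rfl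
    apply hBne
    rw [← hAX]
    unfold cmul
    simp
  have key : ∀ a ∈ A.support, ∀ x ∈ X.support,
      Nat.lcm a x ∈ B.support ∧ A a * X x * Nat.gcd a x = 1 := by
    intro a ha x hx
    have hterm : A a * X x * Nat.gcd a x ≤ cmul A X (Nat.lcm a x) := by
      rw [cmul_apply']
      calc A a * X x * Nat.gcd a x
          = if Nat.lcm a x = Nat.lcm a x then A a * X x * Nat.gcd a x else 0 := by simp
        _ ≤ ∑ x' ∈ X.support,
              if Nat.lcm a x' = Nat.lcm a x then A a * X x' * Nat.gcd a x' else 0 :=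
            Finset.single_le_sum
              (f := fun x' => if Nat.lcm a x' = Nat.lcm a x then A a * X x' * Nat.gcd a x' else 0)
              (fun _ _ => Nat.zero_le _) hx
        _ ≤ _ := Finset.single_le_sum
            (f := fun a' => ∑ x' ∈ X.support,
              if Nat.lcm a' x' = Nat.lcm a x then A a' * X x' * Nat.gcd a' x' else 0)
            (fun _ _ => Nat.zero_le _) ha
    have hgpos : 0 < Nat.gcd a x := Nat.gcd_pos_of_pos_left _ (hA a ha)
    have hapos : 0 < A a := Nat.pos_of_ne_zero (Finsupp.mem_support_iff.mp ha)
    have hxpos : 0 < X x := Nat.pos_of_ne_zero (Finsupp.mem_support_iff.mp hx)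
    have hpos : 0 < A a * X x * Nat.gcd a x := by positivity
    have hmem : Nat.lcm a x ∈ B.support := by
      rw [Finsupp.mem_support_iff, ← hAX]
      omega
    refine ⟨hmem, ?_⟩
    have hb1 : B (Nat.lcm a x) = 1 := hmult _ hmem
    rw [← hAX] at hb1
    omega
  have hx1 : ∀ x ∈ X.support, x = 1 := by
    intro x hx
    obtain ⟨a, ha⟩ := hAsupp
    have hcop : Nat.Coprime x (A.support.lcm id) := by
      refine coprime_finset_lcm' _ fun a' ha' => ?_
      have h := (key a' ha' x hx).2
      have hg : Nat.gcd a' x = 1 := Nat.eq_one_of_dvd_one (h ▸ dvd_mul_left _ _)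
      exact Nat.coprime_comm.mp hg
    have hdvd : x ∣ A.support.lcm id :=
      dvd_trans (Nat.dvd_lcm_right a x) (hbasic _ (key a ha x hx).1)
    have := Nat.dvd_gcd (dvd_refl x) hdvd
    rw [Nat.Coprime] at hcop
    rw [hcop] at this
    exact Nat.dvd_one.mp this
  obtain ⟨x0, hx0⟩ := hXsupp
  have h1mem : (1 : ℕ) ∈ X.support := hx1 x0 hx0 ▸ hx0
  obtain ⟨a, ha⟩ := hAsupp
  have hX1 : X 1 = 1 := by
    have h := (key a ha 1 h1mem).2
    have hd : X 1 ∣ A a * X 1 * Nat.gcd a 1 := (dvd_mul_left (X 1) (A a)).mul_right _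
    rw [h] at hd
    exact Nat.eq_one_of_dvd_one hd
  have hXeq : X = Cyc 1 := by
    ext n
    rcases eq_or_ne n 1 with rfl | hn
    · simpa [Cyc] using hX1
    · have : n ∉ X.support := fun hmem => hn (hx1 n hmem)
      rw [Finsupp.notMem_support_iff] at this
      simp [Cyc, this, Finsupp.single_apply, (Ne.symm hn)]
  refine ⟨hXeq, ?_⟩
  rw [← hAX, hXeq, cmul_cyc_one']
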